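/- In a project-join tree of a CNF formula φ, for every node n, the valuation satisfies f^W_n = ∃_{P(n)}(Φ(n) · W_{P(n)}): the recursively defined valuation at n equals the projection over P(n) of the product of all clauses in the subtree at n with the partial literal weights W_{P(n)}. -/

import Mathlib

variable {V : Type*} [DecidableEq V]

structure Clause (V : Type*) where
  pos : Finset V
  neg : Finset V

def Clause.vars [DecidableEq V] (c : Clause V) : Finset V := c.pos ∪ c.neg

noncomputable def Clause.ind [DecidableEq V] (c : Clause V) (τ : Finset V) : ℝ :=
  if (∃ x ∈ c.pos, x ∈ τ) ∨ (∃ x ∈ c.neg, x ∉ τ) then 1 else 0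

inductive PJT (V : Type*) where
  | leaf (c : Clause V)
  | node (lbl : Finset V) (children : List (PJT V))

namespace PJT

def clauses : PJT V → Multiset (Clause V)
  | .leaf c => {c}
  | .node _ cs => (cs.attach.map (fun o => clauses o.1)).sum
decreasing_by
  have := List.sizeOf_lt_of_mem o.2
  simp only [PJT.node.sizeOf_spec]
  omega

def labels : PJT V → Multiset (Finset V)
  | .leaf _ => 0
  | .node lbl cs => lbl ::ₘ (cs.attach.map (fun o => labels o.1)).sum
decreasing_by
  have := List.sizeOf_lt_of_mem o.2
  simp only [PJT.node.sizeOf_spec]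
  omega

def P : PJT V → Finset V
  | .leaf _ => ∅
  | .node lbl cs => lbl ∪ (cs.attach.map (fun o => P o.1)).foldr (· ∪ ·) ∅
decreasing_by
  have := List.sizeOf_lt_of_mem o.2
  simp only [PJT.node.sizeOf_spec]
  omega

def varsOf : PJT V → Finset V
  | .leaf c => c.vars
  | .node lbl cs => (cs.attach.map (fun o => varsOf o.1)).foldr (· ∪ ·) ∅ \ lbl
decreasing_by
  have := List.sizeOf_lt_of_mem o.2
  simp only [PJT.node.sizeOf_spec]
  omega

def size : PJT V → ℕ
  | .leaf c => c.vars.card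
  | .node lbl cs => (varsOf (.node lbl cs) ∪ lbl).card

def width : PJT V → ℕ
  | .leaf c => c.vars.card
  | .node lbl cs =>
      max (size (.node lbl cs)) ((cs.attach.map (fun o => width o.1)).foldr max 0)
decreasing_by
  have := List.sizeOf_lt_of_mem o.2
  simp only [PJT.node.sizeOf_spec]
  omega

def wProd (W : V → Bool → ℝ) (S : Finset V) (τ : Finset V) : ℝ :=
  ∏ x ∈ S, W x (decide (x ∈ τ))

noncomputable def val (W : V → Bool → ℝ) : PJT V → Finset V → ℝ
  | .leaf c => c.ind
  | .node lbl cs => fun τ =>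
      ∑ σ ∈ lbl.powerset,
        (cs.attach.map (fun o => val W o.1 ((τ ∪ σ) ∩ varsOf o.1))).prod
          * wProd W lbl (τ ∪ σ)
decreasing_by
  have := List.sizeOf_lt_of_mem o.2
  simp only [PJT.node.sizeOf_spec]
  omega

inductive Subtree : PJT V → PJT V → Prop
  | refl (t : PJT V) : Subtree t t
  | child {s c : PJT V} {lbl : Finset V} {cs : List (PJT V)} :
      c ∈ cs → Subtree s c → Subtree s (.node lbl cs)

end PJT

def Formula.vars (φ : Finset (Clause V)) : Finset V := φ.sup Clause.vars

def clausesVars (M : Multiset (Clause V)) : Finset V := (M.map Clause.vars).sup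

structure IsPJT (φ : Finset (Clause V)) (t : PJT V) : Prop where
  clauses_eq : t.clauses = φ.val
  cover : t.P = Formula.vars φ
  disjoint_labels : (t.labels.map Finset.card).sum = (Formula.vars φ).card
  descend : ∀ lbl cs, PJT.Subtree (.node lbl cs) t →
    ∀ c ∈ φ, ∀ x ∈ lbl, x ∈ c.vars → c ∈ PJT.clauses (.node lbl cs)


namespace PJTAux

open PJT

variable {V : Type*} [DecidableEq V]

theorem strongInd {motive : PJT V → Prop}
    (hleaf : ∀ c, motive (.leaf c))
    (hnode : ∀ lbl cs, (∀ o ∈ cs, motive o) → motive (.node lbl cs)) :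
    ∀ t : PJT V, motive t
  | .leaf c => hleaf c
  | .node lbl cs => hnode lbl cs (fun o ho => strongInd hleaf hnode o)
decreasing_by
  have := List.sizeOf_lt_of_mem ho
  simp only [PJT.node.sizeOf_spec]
  omega

theorem clauses_node (lbl : Finset V) (cs : List (PJT V)) :
    (PJT.node lbl cs).clauses = (cs.map clauses).sum := by
  rw [clauses, List.attach_map_val]

theorem labels_node (lbl : Finset V) (cs : List (PJT V)) :
    (PJT.node lbl cs).labels = lbl ::ₘ (cs.map labels).sum := by
  rw [labels, List.attach_map_val]

def Plist (L : List (PJT V)) : Finset V := (L.map P).foldr (· ∪ ·) ∅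

def Vlist (L : List (PJT V)) : Finset V := (L.map varsOf).foldr (· ∪ ·) ∅

theorem P_node (lbl : Finset V) (cs : List (PJT V)) :
    (PJT.node lbl cs).P = lbl ∪ Plist cs := by
  rw [P, List.attach_map_val]; rfl

theorem varsOf_node (lbl : Finset V) (cs : List (PJT V)) :
    (PJT.node lbl cs).varsOf = Vlist cs \ lbl := by
  rw [varsOf, List.attach_map_val]; rfl

theorem val_node (W : V → Bool → ℝ) (lbl : Finset V) (cs : List (PJT V)) (τ : Finset V) :
    (PJT.node lbl cs).val W τ = ∑ σ ∈ lbl.powerset,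
      (cs.map (fun o => o.val W ((τ ∪ σ) ∩ o.varsOf))).prod * wProd W lbl (τ ∪ σ) := by
  rw [val]
  refine Finset.sum_congr rfl fun σ _ => ?_
  rw [List.attach_map_val (l := cs) (f := fun o => val W o ((τ ∪ σ) ∩ o.varsOf))]

theorem mem_foldr_union {x : V} {l : List (Finset V)} :
    x ∈ l.foldr (· ∪ ·) ∅ ↔ ∃ s ∈ l, x ∈ s := by
  induction l with
  | nil => simp
  | cons a l ih => simp [ih]

theorem mem_Plist {x : V} {L : List (PJT V)} : x ∈ Plist L ↔ ∃ o ∈ L, x ∈ o.P := by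
  simp [Plist, mem_foldr_union]

theorem mem_Vlist {x : V} {L : List (PJT V)} : x ∈ Vlist L ↔ ∃ o ∈ L, x ∈ o.varsOf := by
  simp [Vlist, mem_foldr_union]

theorem list_le_sum {α : Type*} {l : List (Multiset α)} {m : Multiset α} (hm : m ∈ l) :
    m ≤ l.sum := by
  induction l with
  | nil => simp at hm
  | cons a l ih =>
    rcases List.mem_cons.mp hm with h | h
    · subst h; exact Multiset.le_add_right _ _
    · exact (ih h).trans (Multiset.le_add_left _ _)

theorem pair_le_sum {α β : Type*} {l : List α} (f : α → Multiset β) {a b : α}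
    (ha : a ∈ l) (hb : b ∈ l) (hab : a ≠ b) : f a + f b ≤ (l.map f).sum := by
  induction l with
  | nil => simp at ha
  | cons x l ih =>
    rcases List.mem_cons.mp ha with h | h
    · subst h
      have hb' : b ∈ l := by
        rcases List.mem_cons.mp hb with h' | h'
        · exact absurd h'.symm hab
        · exact h'
      simp only [List.map_cons, List.sum_cons]
      exact add_le_add le_rfl (list_le_sum (List.mem_map_of_mem (f := f) hb'))
    · rcases List.mem_cons.mp hb with h' | h'
      · subst h'
        simp only [List.map_cons, List.sum_cons]
        calc f a + f b = f b + f a := add_comm _ _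
        _ ≤ f b + (l.map f).sum := add_le_add le_rfl (list_le_sum (List.mem_map_of_mem (f := f) h))
      · exact (ih h h').trans (Multiset.le_add_left _ _)

theorem mem_list_sum {α : Type*} {l : List (Multiset α)} {a : α} :
    a ∈ l.sum ↔ ∃ m ∈ l, a ∈ m := by
  induction l with
  | nil => simp
  | cons x l ih => simp [ih]

theorem subtree_trans {a b c : PJT V} (h1 : Subtree a b) (h2 : Subtree b c) : Subtree a c := by
  induction h2 with
  | refl => exact h1
  | child hmem _ ih => exact Subtree.child hmem ih

theorem subtree_child {lbl : Finset V} {cs : List (PJT V)} {o : PJT V} (ho : o ∈ cs) :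
    Subtree o (.node lbl cs) := Subtree.child ho (Subtree.refl o)

theorem clauses_le {s t : PJT V} (h : Subtree s t) : s.clauses ≤ t.clauses := by
  induction h with
  | refl => exact le_rfl
  | child hmem _ ih =>
    refine ih.trans ?_
    rw [clauses_node]
    exact list_le_sum (List.mem_map_of_mem (f := clauses) hmem)

theorem labels_le {s t : PJT V} (h : Subtree s t) : s.labels ≤ t.labels := by
  induction h with
  | refl => exact le_rfl
  | child hmem _ ih =>
    refine ih.trans ?_
    rw [labels_node]
    exact ((list_le_sum (List.mem_map_of_mem (f := labels) hmem)).trans (Multiset.le_cons_self _ _))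

theorem P_eq_sup : ∀ s : PJT V, s.P = s.labels.sup := by
  refine strongInd (fun c => by simp [P, labels]) ?_
  intro lbl cs ih
  rw [P_node, labels_node, Multiset.sup_cons]
  have key : ∀ L : List (PJT V), (∀ o ∈ L, P o = (labels o).sup) →
      Plist L = ((L.map labels).sum).sup := by
    intro L
    induction L with
    | nil => intro _; simp [Plist]
    | cons a L ihL =>
      intro hL
      have h0 : Plist (a :: L) = a.P ∪ Plist L := rfl
      rw [h0, hL a (by simp), ihL (fun o ho => hL o (List.mem_cons_of_mem _ ho))]
      simp [Multiset.sup_add, Finset.sup_eq_union]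
  rw [key cs ih]
  simp [Finset.sup_eq_union]

theorem Plist_eq_sup (L : List (PJT V)) : Plist L = ((L.map labels).sum).sup := by
  induction L with
  | nil => simp [Plist]
  | cons a L ih =>
    have h0 : Plist (a :: L) = a.P ∪ Plist L := rfl
    rw [h0, P_eq_sup, ih]
    simp [Multiset.sup_add, Finset.sup_eq_union]

end PJTAux

namespace PJTAux

variable {V : Type*} [DecidableEq V]
open PJT

theorem vars_subset_clause : ∀ s : PJT V, ∀ c ∈ s.clauses, c.vars ⊆ s.varsOf ∪ s.P := by
  refine strongInd ?_ ?_
  · intro c c' hc'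
    rw [clauses] at hc'
    rw [Multiset.mem_singleton] at hc'
    subst hc'
    rw [varsOf, P]
    simp
  · intro lbl cs ih c hc
    rw [clauses_node] at hc
    rcases mem_list_sum.mp hc with ⟨m, hm, hcm⟩
    rcases List.mem_map.mp hm with ⟨o, ho, rfl⟩
    intro x hx
    have hx' := ih o ho c hcm hx
    rw [varsOf_node, P_node]
    rcases Finset.mem_union.mp hx' with h | h
    · by_cases hl : x ∈ lbl
      · exact Finset.mem_union_right _ (Finset.mem_union_left _ hl)
      · exact Finset.mem_union_left _ (Finset.mem_sdiff.mpr ⟨mem_Vlist.mpr ⟨o, ho, h⟩, hl⟩)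
    · exact Finset.mem_union_right _ (Finset.mem_union_right _ (mem_Plist.mpr ⟨o, ho, h⟩))

theorem exists_clause_of_mem_varsOf :
    ∀ s : PJT V, ∀ x ∈ s.varsOf, ∃ c ∈ s.clauses, x ∈ c.vars := by
  refine strongInd ?_ ?_
  · intro c x hx
    rw [varsOf] at hx
    exact ⟨c, by rw [clauses]; simp, hx⟩
  · intro lbl cs ih x hx
    rw [varsOf_node] at hx
    rcases mem_Vlist.mp (Finset.mem_sdiff.mp hx).1 with ⟨o, ho, hxo⟩
    rcases ih o ho x hxo with ⟨c, hc, hxc⟩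
    refine ⟨c, ?_, hxc⟩
    rw [clauses_node]
    exact mem_list_sum.mpr ⟨clauses o, List.mem_map_of_mem (f := clauses) ho, hc⟩

theorem mem_P_subtree :
    ∀ s : PJT V, ∀ x ∈ s.P, ∃ lbl cs, Subtree (.node lbl cs) s ∧ x ∈ lbl := by
  refine strongInd ?_ ?_
  · intro c x hx
    rw [P] at hx
    simp at hx
  · intro lbl cs ih x hx
    rw [P_node] at hx
    rcases Finset.mem_union.mp hx with h | h
    · exact ⟨lbl, cs, Subtree.refl _, h⟩
    · rcases mem_Plist.mp h with ⟨o, ho, hxo⟩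
      rcases ih o ho x hxo with ⟨lbl', cs', hsub, hxl⟩
      exact ⟨lbl', cs', Subtree.child ho hsub, hxl⟩

theorem card_sup_le (M : Multiset (Finset V)) :
    M.sup.card ≤ (M.map Finset.card).sum := by
  induction M using Multiset.induction_on with
  | empty => simp
  | cons a M ih =>
    rw [Multiset.sup_cons, Multiset.map_cons, Multiset.sum_cons]
    calc (a ⊔ M.sup).card = (a ∪ M.sup).card := by rw [Finset.sup_eq_union]
    _ ≤ a.card + M.sup.card := Finset.card_union_le _ _
    _ ≤ a.card + (M.map Finset.card).sum := by omega

theorem pwd_split {M M₁ M₂ : Multiset (Finset V)}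
    (hM : (M.map Finset.card).sum = M.sup.card) (hle : M₁ + M₂ ≤ M) :
    Disjoint M₁.sup M₂.sup := by
  rcases Multiset.le_iff_exists_add.mp hle with ⟨R, rfl⟩
  have h1 : M₁.sup.card ≤ (M₁.map Finset.card).sum := card_sup_le _
  have h2 : M₂.sup.card ≤ (M₂.map Finset.card).sum := card_sup_le _
  have h3 : R.sup.card ≤ (R.map Finset.card).sum := card_sup_le _
  have hsum : ((M₁ + M₂ + R).map Finset.card).sum
      = (M₁.map Finset.card).sum + (M₂.map Finset.card).sum + (R.map Finset.card).sum := by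
    simp [Multiset.map_add]
  have hsup : (M₁ + M₂ + R).sup = (M₁.sup ∪ M₂.sup) ∪ R.sup := by
    simp [Multiset.sup_add, Finset.sup_eq_union]
  have hc1 : ((M₁.sup ∪ M₂.sup) ∪ R.sup).card ≤ (M₁.sup ∪ M₂.sup).card + R.sup.card :=
    Finset.card_union_le _ _
  have hc2 : (M₁.sup ∪ M₂.sup).card + (M₁.sup ∩ M₂.sup).card = M₁.sup.card + M₂.sup.card :=
    Finset.card_union_add_card_inter _ _
  rw [hsum, hsup] at hM
  have : (M₁.sup ∩ M₂.sup).card = 0 := by omega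
  rw [Finset.card_eq_zero] at this
  exact Finset.disjoint_iff_inter_eq_empty.mpr this

theorem ind_congr {c : Clause V} {τ₁ τ₂ : Finset V}
    (h : ∀ x ∈ c.vars, (x ∈ τ₁ ↔ x ∈ τ₂)) : c.ind τ₁ = c.ind τ₂ := by
  unfold Clause.ind
  refine if_congr (or_congr ?_ ?_) rfl rfl
  · exact exists_congr fun x => and_congr_right fun hx =>
      h x (Finset.mem_union_left _ hx)
  · exact exists_congr fun x => and_congr_right fun hx =>
      not_congr (h x (Finset.mem_union_right _ hx))

theorem wProd_congr {W : V → Bool → ℝ} {S τ₁ τ₂ : Finset V}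
    (h : ∀ x ∈ S, (x ∈ τ₁ ↔ x ∈ τ₂)) : wProd W S τ₁ = wProd W S τ₂ :=
  Finset.prod_congr rfl fun x hx => by rw [decide_eq_decide.mpr (h x hx)]

theorem wProd_union {W : V → Bool → ℝ} {X Y τ : Finset V} (h : Disjoint X Y) :
    wProd W (X ∪ Y) τ = wProd W X τ * wProd W Y τ :=
  Finset.prod_union h

theorem sum_powerset_union {X Y : Finset V} (h : Disjoint X Y) (F : Finset V → ℝ) :
    ∑ ρ ∈ (X ∪ Y).powerset, F ρ
      = ∑ ρ₁ ∈ X.powerset, ∑ ρ₂ ∈ Y.powerset, F (ρ₁ ∪ ρ₂) := by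
  rw [← Finset.sum_product']
  refine Finset.sum_nbij' (i := fun ρ => (ρ ∩ X, ρ ∩ Y)) (j := fun p => p.1 ∪ p.2)
    ?_ ?_ ?_ ?_ ?_
  · intro ρ hρ
    simp only [Finset.mem_product, Finset.mem_powerset]
    exact ⟨Finset.inter_subset_right, Finset.inter_subset_right⟩
  · intro p hp
    simp only [Finset.mem_product, Finset.mem_powerset] at hp
    exact Finset.mem_powerset.mpr (Finset.union_subset_union hp.1 hp.2)
  · intro ρ hρ
    rw [Finset.mem_powerset] at hρ
    simp only
    rw [← Finset.inter_union_distrib_left]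
    exact Finset.inter_eq_left.mpr hρ
  · intro p hp
    simp only [Finset.mem_product, Finset.mem_powerset] at hp
    have h1 : (p.1 ∪ p.2) ∩ X = p.1 := by
      rw [Finset.union_inter_distrib_right, Finset.inter_eq_left.mpr hp.1,
        Finset.disjoint_iff_inter_eq_empty.mp ((h.symm.mono_left hp.2))]
      simp
    have h2 : (p.1 ∪ p.2) ∩ Y = p.2 := by
      rw [Finset.union_inter_distrib_right, Finset.inter_eq_left.mpr hp.2,
        Finset.disjoint_iff_inter_eq_empty.mp (h.mono_left hp.1)]
      simp
    simp [h1, h2]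
  · intro ρ hρ
    rw [Finset.mem_powerset] at hρ
    simp only
    rw [← Finset.inter_union_distrib_left, Finset.inter_eq_left.mpr hρ]

end PJTAux

namespace PJTAux

variable {V : Type*} [DecidableEq V]
open PJT

instance : DecidableEq (Clause V)
  | ⟨p₁, n₁⟩, ⟨p₂, n₂⟩ =>
    decidable_of_iff (p₁ = p₂ ∧ n₁ = n₂) (by simp [Clause.mk.injEq])

theorem pwd {φ : Finset (Clause V)} {t : PJT V} (ht : IsPJT φ t) :
    (t.labels.map Finset.card).sum = t.labels.sup.card := by
  rw [ht.disjoint_labels, ← ht.cover, P_eq_sup]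

theorem count_le_one {φ : Finset (Clause V)} {t : PJT V} (ht : IsPJT φ t) (c : Clause V) :
    t.clauses.count c ≤ 1 := by
  rw [ht.clauses_eq]
  exact Multiset.nodup_iff_count_le_one.mp φ.nodup c

theorem clauses_disj {φ : Finset (Clause V)} {t : PJT V} (ht : IsPJT φ t)
    {M₁ M₂ : Multiset (Clause V)} (h : M₁ + M₂ ≤ t.clauses) :
    ∀ c ∈ M₁, c ∉ M₂ := by
  intro c hc1 hc2
  have h1 : 1 ≤ M₁.count c := Multiset.count_pos.mpr hc1
  have h2 : 1 ≤ M₂.count c := Multiset.count_pos.mpr hc2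
  have h3 : (M₁ + M₂).count c ≤ t.clauses.count c := Multiset.count_le_of_le c h
  rw [Multiset.count_add] at h3
  have := count_le_one ht c
  omega

theorem mem_phi {φ : Finset (Clause V)} {t : PJT V} (ht : IsPJT φ t) {s : PJT V}
    (hs : Subtree s t) {c : Clause V} (hc : c ∈ s.clauses) : c ∈ φ := by
  have := Multiset.mem_of_le (clauses_le hs) hc
  rwa [ht.clauses_eq, Finset.mem_val] at this

theorem key {φ : Finset (Clause V)} {t : PJT V} (ht : IsPJT φ t) {s : PJT V}
    (hs : Subtree s t) {x : V} (hx : x ∈ s.P) {c : Clause V} (hc : c ∈ φ)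
    (hxc : x ∈ c.vars) : c ∈ s.clauses := by
  rcases mem_P_subtree s x hx with ⟨lbl', cs', hsub, hxl⟩
  have := ht.descend lbl' cs' (subtree_trans hsub hs) c hc x hxl hxc
  exact Multiset.mem_of_le (clauses_le hsub) this

theorem cross {φ : Finset (Clause V)} {t : PJT V} (ht : IsPJT φ t) {s₁ s₂ : PJT V}
    (h1 : Subtree s₁ t) (h2 : Subtree s₂ t)
    (hd : ∀ c ∈ s₁.clauses, c ∉ s₂.clauses) : Disjoint s₁.varsOf s₂.P := by
  rw [Finset.disjoint_left]
  intro x hxV hxP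
  rcases exists_clause_of_mem_varsOf s₁ x hxV with ⟨c, hc, hxc⟩
  exact hd c hc (key ht h2 hxP (mem_phi ht h1 hc) hxc)

theorem disj_varsOf_P {φ : Finset (Clause V)} {t : PJT V} (ht : IsPJT φ t) :
    ∀ s : PJT V, Subtree s t → Disjoint s.varsOf s.P := by
  refine strongInd ?_ ?_
  · intro c _
    rw [P]
    exact Finset.disjoint_empty_right _
  · intro lbl cs ih hs
    rw [varsOf_node, P_node, Finset.disjoint_left]
    intro x hx1 hx2
    rcases Finset.mem_sdiff.mp hx1 with ⟨hv, hnl⟩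
    rcases Finset.mem_union.mp hx2 with h | h
    · exact hnl h
    rcases mem_Plist.mp h with ⟨o, ho, hxP⟩
    rcases mem_Vlist.mp hv with ⟨o', ho', hxV⟩
    by_cases heq : o' = o
    · subst heq
      exact Finset.disjoint_left.mp
        (ih o' ho' (subtree_trans (subtree_child ho') hs)) hxV hxP
    · have hle : o'.clauses + o.clauses ≤ t.clauses := by
        refine le_trans (pair_le_sum clauses ho' ho heq) ?_
        rw [← clauses_node lbl]
        exact clauses_le hs
      exact Finset.disjoint_left.mp
        (cross ht (subtree_trans (subtree_child ho') hs)
          (subtree_trans (subtree_child ho) hs) (clauses_disj ht hle)) hxV hxP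

end PJTAux

namespace PJTAux

variable {V : Type*} [DecidableEq V]
open PJT

theorem list_claim {φ : Finset (Clause V)} {t : PJT V} (ht : IsPJT φ t) (W : V → Bool → ℝ)
    (A : Finset V) :
    ∀ L : List (PJT V),
    (∀ o ∈ L, Subtree o t) →
    (∀ o ∈ L, ∀ B ⊆ o.varsOf, o.val W B = ∑ ρ ∈ o.P.powerset,
        (o.clauses.map (fun c => c.ind (B ∪ ρ))).prod * wProd W o.P (B ∪ ρ)) →
    Disjoint A (Plist L) →
    ((L.map clauses).sum ≤ t.clauses) →
    ((L.map labels).sum ≤ t.labels) →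
    (L.map (fun o => o.val W (A ∩ o.varsOf))).prod
      = ∑ ρ ∈ (Plist L).powerset,
          (((L.map clauses).sum).map (fun c => c.ind (A ∪ ρ))).prod
            * wProd W (Plist L) (A ∪ ρ) := by
  intro L
  induction L with
  | nil =>
    intro _ _ _ _ _
    simp [Plist, wProd]
  | cons o L ih =>
    intro hsub hval hA hcl hlab
    have hPlist : Plist (o :: L) = o.P ∪ Plist L := rfl
    have hsubo : Subtree o t := hsub o (by simp)
    have hsub' : ∀ o' ∈ L, Subtree o' t := fun o' h => hsub o' (List.mem_cons_of_mem _ h)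
    have hclo : ((o :: L).map clauses).sum = o.clauses + (L.map clauses).sum := by simp
    have hlabo : ((o :: L).map labels).sum = o.labels + (L.map labels).sum := by simp
    have hcl2 : o.clauses + (L.map clauses).sum ≤ t.clauses := by rw [← hclo]; exact hcl
    have hcl' : (L.map clauses).sum ≤ t.clauses :=
      le_trans (Multiset.le_add_left _ _) hcl2
    have hlab' : (L.map labels).sum ≤ t.labels :=
      le_trans (Multiset.le_add_left _ _) (by rw [← hlabo]; exact hlab)
    have hA' : Disjoint A (Plist L) :=
      hA.mono_right (by rw [hPlist]; exact Finset.subset_union_right)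
    have hAPo : Disjoint A o.P :=
      hA.mono_right (by rw [hPlist]; exact Finset.subset_union_left)
    have dPQ : Disjoint o.P (Plist L) := by
      have h := pwd_split (M₁ := o.labels) (M₂ := (L.map labels).sum) (pwd ht)
        (by rw [← hlabo]; exact hlab)
      rwa [← P_eq_sup, ← Plist_eq_sup] at h
    have hdisj : ∀ c ∈ o.clauses, c ∉ (L.map clauses).sum := clauses_disj ht hcl2
    have dVoQ : Disjoint o.varsOf (Plist L) := by
      rw [Finset.disjoint_left]
      intro x hxV hxQ
      rcases mem_Plist.mp hxQ with ⟨o'', ho'', hxP⟩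
      rcases exists_clause_of_mem_varsOf o x hxV with ⟨c, hc, hxc⟩
      exact hdisj c hc (mem_list_sum.mpr ⟨_, List.mem_map_of_mem (f := clauses) ho'',
        key ht (hsub' o'' ho'') hxP (mem_phi ht hsubo hc) hxc⟩)
    have dV'Po : ∀ o'' ∈ L, Disjoint o''.varsOf o.P := by
      intro o'' ho''
      rw [Finset.disjoint_left]
      intro x hxV hxP
      rcases exists_clause_of_mem_varsOf o'' x hxV with ⟨c, hc, hxc⟩
      exact hdisj c (key ht hsubo hxP (mem_phi ht (hsub' o'' ho'') hc) hxc)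
        (mem_list_sum.mpr ⟨_, List.mem_map_of_mem (f := clauses) ho'', hc⟩)
    have dVoPo : Disjoint o.varsOf o.P := disj_varsOf_P ht o hsubo
    rw [List.map_cons, List.prod_cons,
      hval o (by simp) (A ∩ o.varsOf) Finset.inter_subset_right,
      ih hsub' (fun o' h => hval o' (List.mem_cons_of_mem _ h)) hA' hcl' hlab',
      Finset.sum_mul_sum, hPlist, sum_powerset_union dPQ]
    refine Finset.sum_congr rfl fun ρ₁ hρ₁ => Finset.sum_congr rfl fun ρ₂ hρ₂ => ?_
    rw [Finset.mem_powerset] at hρ₁ hρ₂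
    have h1 : ∀ x, x ∈ ρ₁ → x ∈ o.P := fun x h => hρ₁ h
    have h2 : ∀ x, x ∈ ρ₂ → x ∈ Plist L := fun x h => hρ₂ h
    have d1 := Finset.disjoint_left.mp dVoPo
    have d2 := Finset.disjoint_left.mp dVoQ
    have d3 := Finset.disjoint_left.mp dPQ
    have d4 := Finset.disjoint_left.mp hAPo
    have e1 : (o.clauses.map (fun c => c.ind (A ∩ o.varsOf ∪ ρ₁))).prod
        = (o.clauses.map (fun c => c.ind (A ∪ (ρ₁ ∪ ρ₂)))).prod := by
      refine congrArg Multiset.prod (Multiset.map_congr rfl fun c hc => ?_)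
      refine ind_congr fun x hx => ?_
      have hvx := vars_subset_clause o c hc hx
      simp only [Finset.mem_union, Finset.mem_inter] at hvx ⊢
      constructor
      · rintro (⟨ha, _⟩ | hr)
        · exact Or.inl ha
        · exact Or.inr (Or.inl hr)
      · rintro (ha | hr | hr2)
        · rcases hvx with hv | hp
          · exact Or.inl ⟨ha, hv⟩
          · exact absurd hp (d4 ha)
        · exact Or.inr hr
        · rcases hvx with hv | hp
          · exact absurd (h2 x hr2) (d2 hv)
          · exact absurd (h2 x hr2) (d3 hp)
    have e2 : (((L.map clauses).sum).map (fun c => c.ind (A ∪ ρ₂))).prod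
        = (((L.map clauses).sum).map (fun c => c.ind (A ∪ (ρ₁ ∪ ρ₂)))).prod := by
      refine congrArg Multiset.prod (Multiset.map_congr rfl fun c hc => ?_)
      rcases mem_list_sum.mp hc with ⟨m, hm, hcm⟩
      rcases List.mem_map.mp hm with ⟨o'', ho'', rfl⟩
      refine ind_congr fun x hx => ?_
      have hvx := vars_subset_clause o'' c hcm hx
      simp only [Finset.mem_union] at hvx ⊢
      have hd6 : x ∉ o.P := by
        rcases hvx with hv | hp
        · exact fun ho => Finset.disjoint_left.mp (dV'Po o'' ho'') hv ho
        · exact fun ho => d3 ho (mem_Plist.mpr ⟨o'', ho'', hp⟩)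
      constructor
      · rintro (ha | hr2)
        · exact Or.inl ha
        · exact Or.inr (Or.inr hr2)
      · rintro (ha | hr1 | hr2)
        · exact Or.inl ha
        · exact absurd (h1 x hr1) hd6
        · exact Or.inr hr2
    have e3 : wProd W o.P (A ∩ o.varsOf ∪ ρ₁) = wProd W o.P (A ∪ (ρ₁ ∪ ρ₂)) := by
      refine wProd_congr fun x hx => ?_
      simp only [Finset.mem_union, Finset.mem_inter]
      have hd1 : x ∉ o.varsOf := fun hv => d1 hv hx
      have hd3' := d3 hx
      have hd4 : x ∉ A := fun ha => d4 ha hx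
      constructor
      · rintro (⟨_, hv⟩ | hr)
        · exact absurd hv hd1
        · exact Or.inr (Or.inl hr)
      · rintro (ha | hr | hr2)
        · exact absurd ha hd4
        · exact Or.inr hr
        · exact absurd (h2 x hr2) hd3'
    have e4 : wProd W (Plist L) (A ∪ ρ₂) = wProd W (Plist L) (A ∪ (ρ₁ ∪ ρ₂)) := by
      refine wProd_congr fun x hx => ?_
      simp only [Finset.mem_union]
      have hh1 : x ∉ ρ₁ := fun hr => d3 (h1 x hr) hx
      constructor
      · rintro (ha | hr2)
        · exact Or.inl ha
        · exact Or.inr (Or.inr hr2)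
      · rintro (ha | hr | hr2)
        · exact Or.inl ha
        · exact absurd hr hh1
        · exact Or.inr hr2
    rw [e1, e3, e2, e4, hclo, Multiset.map_add, Multiset.prod_add, wProd_union dPQ]
    ring

end PJTAux

namespace PJTAux

variable {V : Type*} [DecidableEq V]
open PJT

theorem main_aux {φ : Finset (Clause V)} {t : PJT V} (ht : IsPJT φ t) (W : V → Bool → ℝ) :
    ∀ s : PJT V, Subtree s t → ∀ τ, τ ⊆ s.varsOf →
      s.val W τ = ∑ σ ∈ s.P.powerset,
        (s.clauses.map (fun c => c.ind (τ ∪ σ))).prod * wProd W s.P (τ ∪ σ) := by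
  refine strongInd ?_ ?_
  · intro c _ τ _
    rw [val, P, clauses]
    simp [wProd]
  · intro lbl cs ih hs τ hτ
    have hsubs : ∀ o ∈ cs, Subtree o t := fun o ho => subtree_trans (subtree_child ho) hs
    have hlabcs : (cs.map labels).sum ≤ t.labels :=
      le_trans (Multiset.le_cons_self _ lbl) (by rw [← labels_node]; exact labels_le hs)
    have hclcs : (cs.map clauses).sum ≤ t.clauses := by
      rw [← clauses_node lbl]; exact clauses_le hs
    have dlblQ : Disjoint lbl (Plist cs) := by
      have h := pwd_split (M₁ := {lbl}) (M₂ := (cs.map labels).sum) (pwd ht) ?_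
      · rwa [Multiset.sup_singleton, ← Plist_eq_sup] at h
      · have h0 : ({lbl} : Multiset (Finset V)) + (cs.map labels).sum
            = (PJT.node lbl cs).labels := by
          rw [labels_node, Multiset.singleton_add]
        rw [h0]
        exact labels_le hs
    have dτσQ : ∀ σ ⊆ lbl, Disjoint (τ ∪ σ) (Plist cs) := by
      intro σ hσ
      refine Finset.disjoint_union_left.mpr ⟨?_, ?_⟩
      · refine Finset.disjoint_of_subset_left hτ ?_
        refine Finset.disjoint_of_subset_right ?_ (disj_varsOf_P ht _ hs)
        rw [P_node]
        exact Finset.subset_union_right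
      · exact Finset.disjoint_of_subset_left hσ dlblQ
    rw [val_node]
    have step : ∀ σ ∈ lbl.powerset,
        (cs.map (fun o => o.val W ((τ ∪ σ) ∩ o.varsOf))).prod * wProd W lbl (τ ∪ σ)
        = (∑ ρ ∈ (Plist cs).powerset,
            ((cs.map clauses).sum.map (fun c => c.ind ((τ ∪ σ) ∪ ρ))).prod
              * wProd W (Plist cs) ((τ ∪ σ) ∪ ρ)) * wProd W lbl (τ ∪ σ) := by
      intro σ hσ
      rw [Finset.mem_powerset] at hσ
      rw [list_claim ht W (τ ∪ σ) cs hsubs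
        (fun o ho B hB => ih o ho (hsubs o ho) B hB) (dτσQ σ hσ) hclcs hlabcs]
    rw [Finset.sum_congr rfl step, P_node, clauses_node, sum_powerset_union dlblQ]
    refine Finset.sum_congr rfl fun σ hσ => ?_
    rw [Finset.sum_mul]
    refine Finset.sum_congr rfl fun ρ hρ => ?_
    rw [Finset.mem_powerset] at hσ hρ
    have hassoc : τ ∪ (σ ∪ ρ) = (τ ∪ σ) ∪ ρ := (Finset.union_assoc τ σ ρ).symm
    rw [hassoc, wProd_union dlblQ]
    have hw : wProd W lbl ((τ ∪ σ) ∪ ρ) = wProd W lbl (τ ∪ σ) := by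
      refine wProd_congr fun x hx => ?_
      have hxρ : x ∉ ρ := fun hr => Finset.disjoint_left.mp dlblQ hx (hρ hr)
      simp only [Finset.mem_union]
      constructor
      · rintro ((h | h) | h)
        · exact Or.inl h
        · exact Or.inr h
        · exact absurd h hxρ
      · rintro (h | h)
        · exact Or.inl (Or.inl h)
        · exact Or.inl (Or.inr h)
    rw [hw]
    ring

end PJTAux

theorem pjt_valuation {V : Type*} [DecidableEq V]
    (φ : Finset (Clause V)) (t : PJT V) (h : IsPJT φ t)
    (W : V → Bool → ℝ) (s : PJT V) (hs : PJT.Subtree s t)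
    (τ : Finset V) (hτ : τ ⊆ s.varsOf) :
    s.val W τ = ∑ σ ∈ s.P.powerset,
      (s.clauses.map (fun c => c.ind (τ ∪ σ))).prod * PJT.wProd W s.P (τ ∪ σ) :=
  PJTAux.main_aux h W s hs τ hτ
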